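/- arXiv:1512.06112 — 2 statements merged into one kernel-verified Lean document; each statement's English description precedes it below -/
import Mathlib

section
/- Let G be a graph, ≺ a total order on its vertices, and α, β positive integers. If χ(G) > (2β+2)·α, then G has an induced subgraph H such that χ(H) > α and for every edge uv of H, the subgraph of G induced on the vertices strictly between u and v in the order ≺ has chromatic number greater than β. -/
open SimpleGraph

section Aux

variable {V : Type} [Fintype V] [LinearOrder V]

private lemma col_mono_subset (G : SimpleGraph V) {A B : Set V} (h : A ⊆ B) {n : ℕ}
    (hc : (G.induce B).Colorable n) : (G.induce A).Colorable n := by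
  obtain ⟨C⟩ := hc
  exact ⟨SimpleGraph.Coloring.mk (fun a => C ⟨a.1, h a.2⟩) (by
    intro a b hab
    exact C.valid (by simpa using hab))⟩

private lemma col_insert (G : SimpleGraph V) {S : Set V} {z : V} {n : ℕ}
    (hc : (G.induce S).Colorable n) : (G.induce (insert z S)).Colorable (n + 1) := by
  obtain ⟨C⟩ := hc
  refine ⟨SimpleGraph.Coloring.mk
    (fun x => if hx : (x : V) = z then Fin.last n
      else Fin.castSucc (C ⟨x.1, x.2.resolve_left hx⟩)) ?_⟩
  intro a b hab heq
  have hadj : G.Adj a.1 b.1 := by simpa using hab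
  by_cases ha : (a : V) = z <;> by_cases hb : (b : V) = z
  · exact hadj.ne (ha.trans hb.symm)
  · rw [dif_pos ha, dif_neg hb] at heq
    exact (Fin.castSucc_lt_last _).ne' heq
  · rw [dif_neg ha, dif_pos hb] at heq
    exact (Fin.castSucc_lt_last _).ne heq
  · rw [dif_neg ha, dif_neg hb] at heq
    exact C.valid (by simpa using hadj) (Fin.castSucc_inj.mp heq)

private lemma col_subsingleton (G : SimpleGraph V) {S : Set V} (h : S.Subsingleton) (n : ℕ) :
    (G.induce S).Colorable (n + 1) := by
  refine ⟨SimpleGraph.Coloring.mk (fun _ => 0) ?_⟩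
  intro a b hab _
  have hadj : G.Adj a.1 b.1 := by simpa using hab
  exact hadj.ne (h a.2 b.2)

/-- Key construction: a `(2β+2)`-coloring of the vertices (as `Bool × Fin (β+1)`) such that
adjacent vertices of equal color are joined by a "long" edge. -/
private lemma mcg_aux (G : SimpleGraph V) (β : ℕ) :
    ∀ (n : ℕ) (w : V) (p : Bool),
      (Finset.univ.filter (fun x => w ≤ x)).card ≤ n →
      ∃ c : V → Bool × Fin (β + 1),
        (∀ u v : V, w ≤ u → w ≤ v → G.Adj u v → c u = c v →
          ¬ (G.induce (Set.Ioo (min u v) (max u v))).Colorable β) ∧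
        (∀ v : V, w ≤ v → (c v).1 = !p →
          ¬ (G.induce (Set.Ico w v)).Colorable β) := by
  intro n
  induction n with
  | zero =>
    intro w p hcard
    exfalso
    have hw : w ∈ Finset.univ.filter (fun x => w ≤ x) := by simp
    have := Finset.card_pos.mpr ⟨w, hw⟩
    omega
  | succ n ih =>
    intro w p hcard
    classical
    by_cases hsplit : ∃ v, w < v ∧ ¬ (G.induce (Set.Icc w v)).Colorable (β + 1)
    · -- there is a place to cut; let z be the least cut point
      set T := Finset.univ.filter
        (fun v => w < v ∧ ¬ (G.induce (Set.Icc w v)).Colorable (β + 1)) with hT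
      have hTne : T.Nonempty := by
        obtain ⟨v, hv⟩ := hsplit
        exact ⟨v, by simp [hT, hv.1, hv.2]⟩
      set z := T.min' hTne with hzdef
      have hzT : z ∈ T := T.min'_mem hTne
      have hwz : w < z := by
        have := hzT; simp only [hT, Finset.mem_filter] at this; exact this.2.1
      have hzbad : ¬ (G.induce (Set.Icc w z)).Colorable (β + 1) := by
        have := hzT; simp only [hT, Finset.mem_filter] at this; exact this.2.2
      have hzmin : ∀ v, w < v → v < z → (G.induce (Set.Icc w v)).Colorable (β + 1) := by
        intro v h1 h2
        by_contra hcv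
        have hvT : v ∈ T := by simp [hT, h1, hcv]
        exact absurd (T.min'_le v hvT) (not_le.mpr h2)
      -- the block [w, z) is (β+1)-colorable
      have hblock : (G.induce (Set.Ico w z)).Colorable (β + 1) := by
        set Sb := Finset.univ.filter (fun x => w ≤ x ∧ x < z) with hSb
        have hSbne : Sb.Nonempty := ⟨w, by simp [hSb, le_refl, hwz]⟩
        set m := Sb.max' hSbne with hm
        have hmmem : m ∈ Sb := Sb.max'_mem hSbne
        have hwm : w ≤ m := by
          have := hmmem; simp only [hSb, Finset.mem_filter] at this; exact this.2.1
        have hmz : m < z := by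
          have := hmmem; simp only [hSb, Finset.mem_filter] at this; exact this.2.2
        have hset : Set.Ico w z = Set.Icc w m := by
          ext x
          constructor
          · rintro ⟨h1, h2⟩
            exact ⟨h1, Sb.le_max' x (by simp [hSb, h1, h2])⟩
          · rintro ⟨h1, h2⟩
            exact ⟨h1, lt_of_le_of_lt h2 hmz⟩
        rw [hset]
        rcases eq_or_lt_of_le hwm with heq | hlt
        · have : Set.Icc w m ⊆ {w} := by
            rintro x ⟨h1, h2⟩
            simp [le_antisymm (heq ▸ h2) h1]
          exact col_subsingleton G (fun a ha b hb => by
            have ha' := this ha; have hb' := this hb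
            simp only [Set.mem_singleton_iff] at ha' hb'
            rw [ha', hb']) β
        · exact hzmin m hlt hmz
      -- the block [w, z) is NOT β-colorable
      have hlong : ¬ (G.induce (Set.Ico w z)).Colorable β := by
        intro h
        apply hzbad
        have hset : Set.Icc w z = insert z (Set.Ico w z) := by
          ext x
          constructor
          · rintro ⟨h1, h2⟩
            rcases lt_or_eq_of_le h2 with h2' | h2'
            · exact Or.inr ⟨h1, h2'⟩
            · exact Or.inl h2'
          · rintro (rfl | ⟨h1, h2⟩)
            · exact ⟨hwz.le, le_refl _⟩
            · exact ⟨h1, h2.le⟩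
        rw [hset]
        exact col_insert G h
      -- recursion on the rest
      have hcard' : (Finset.univ.filter (fun x => z ≤ x)).card ≤ n := by
        have hss : Finset.univ.filter (fun x => z ≤ x) ⊂
            Finset.univ.filter (fun x => w ≤ x) := by
          constructor
          · intro x hx
            simp only [Finset.mem_filter] at hx ⊢
            exact ⟨hx.1, le_trans hwz.le hx.2⟩
          · intro hsub
            have hw : w ∈ Finset.univ.filter (fun x => w ≤ x) := by simp
            have := hsub hw
            simp only [Finset.mem_filter] at this
            exact absurd this.2 (not_le.mpr hwz)
        have := Finset.card_lt_card hss
        omega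
      obtain ⟨c', hc'1, hc'2⟩ := ih z (!p) hcard'
      obtain ⟨CD⟩ := hblock
      set cD : V → Fin (β + 1) :=
        (fun x => if hx : x ∈ Set.Ico w z then CD ⟨x, hx⟩ else ⟨0, Nat.succ_pos β⟩) with hcD
      refine ⟨fun x => if x < z then (p, cD x) else c' x, ?_, ?_⟩
      · intro u v hu hv hadj hcc
        dsimp only at hcc
        by_cases huz : u < z <;> by_cases hvz : v < z
        · -- both in the block: contradiction with properness of CD
          exfalso
          rw [if_pos huz, if_pos hvz] at hcc
          have h2 : cD u = cD v := congrArg Prod.snd hcc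
          have hu' : u ∈ Set.Ico w z := ⟨hu, huz⟩
          have hv' : v ∈ Set.Ico w z := ⟨hv, hvz⟩
          rw [hcD] at h2
          simp only [dif_pos hu', dif_pos hv'] at h2
          exact CD.valid (by simpa using hadj) h2
        · -- u in block, v above
          rw [if_pos huz, if_neg hvz] at hcc
          have hzv : z ≤ v := not_lt.mp hvz
          have hp : (c' v).1 = !(!p) := by
            rw [Bool.not_not]
            exact (congrArg Prod.fst hcc).symm
          have hlong2 := hc'2 v hzv hp
          have huv : u < v := lt_of_lt_of_le huz hzv
          rw [min_eq_left huv.le, max_eq_right huv.le]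
          intro h
          refine hlong2 (col_mono_subset G ?_ h)
          rintro x ⟨h1, h2⟩
          exact ⟨lt_of_lt_of_le huz h1, h2⟩
        · -- v in block, u above
          rw [if_neg huz, if_pos hvz] at hcc
          have hzu : z ≤ u := not_lt.mp huz
          have hp : (c' u).1 = !(!p) := by
            rw [Bool.not_not]
            exact congrArg Prod.fst hcc
          have hlong2 := hc'2 u hzu hp
          have hvu : v < u := lt_of_lt_of_le hvz hzu
          rw [min_eq_right hvu.le, max_eq_left hvu.le]
          intro h
          refine hlong2 (col_mono_subset G ?_ h)
          rintro x ⟨h1, h2⟩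
          exact ⟨lt_of_lt_of_le hvz h1, h2⟩
        · -- both above: recursion
          rw [if_neg huz, if_neg hvz] at hcc
          exact hc'1 u v (not_lt.mp huz) (not_lt.mp hvz) hadj hcc
      · intro v hv hneg
        dsimp only at hneg
        by_cases hvz : v < z
        · rw [if_pos hvz] at hneg
          simp at hneg
        · have hzv : z ≤ v := not_lt.mp hvz
          rcases eq_or_lt_of_le hzv with heq | hlt
          · rw [← heq]
            exact hlong
          · intro h
            apply hzbad
            have hsub : Set.Icc w z ⊆ Set.Ico w v := by
              rintro x ⟨h1, h2⟩
              exact ⟨h1, lt_of_le_of_lt h2 hlt⟩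
            exact (col_mono_subset G hsub h).mono (Nat.le_succ β)
    · -- no cut: the whole of [w, ∞) is (β+1)-colorable
      push_neg at hsplit
      have hall : ∀ v, w < v → (G.induce (Set.Icc w v)).Colorable (β + 1) := hsplit
      set Sw := Finset.univ.filter (fun x => w ≤ x) with hSw
      have hSwne : Sw.Nonempty := ⟨w, by simp [hSw]⟩
      set m := Sw.max' hSwne with hm
      have hwm : w ≤ m := by
        have := Sw.max'_mem hSwne; simp only [hSw, Finset.mem_filter] at this; exact this.2
      have hset : Set.Ici w = Set.Icc w m := by
        ext x
        constructor
        · intro hx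
          have hx' : w ≤ x := hx
          exact ⟨hx', Sw.le_max' x (by simp [hSw, hx'])⟩
        · rintro ⟨h1, _⟩
          exact h1
      have htop : (G.induce (Set.Ici w)).Colorable (β + 1) := by
        rw [hset]
        rcases eq_or_lt_of_le hwm with heq | hlt
        · have : Set.Icc w m ⊆ {w} := by
            rintro x ⟨h1, h2⟩
            simp [le_antisymm (heq ▸ h2) h1]
          exact col_subsingleton G (fun a ha b hb => by
            have ha' := this ha; have hb' := this hb
            simp only [Set.mem_singleton_iff] at ha' hb'
            rw [ha', hb']) β
        · exact hall m hlt
      obtain ⟨CT⟩ := htop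
      refine ⟨fun x => (p, if hx : x ∈ Set.Ici w then CT ⟨x, hx⟩ else ⟨0, Nat.succ_pos β⟩),
        ?_, ?_⟩
      · intro u v hu hv hadj hcc
        dsimp only at hcc
        exfalso
        have h2 := congrArg Prod.snd hcc
        simp only [dif_pos (Set.mem_Ici.mpr hu), dif_pos (Set.mem_Ici.mpr hv)] at h2
        exact CT.valid (by simpa using hadj) h2
      · intro v hv hneg
        dsimp only at hneg
        simp at hneg

end Aux

/-- McGuinness's lemma: if `χ(G) > (2β+2)·α`, then `G` has an induced subgraph `H`
with `χ(H) > α` such that for every edge `uv` of `H`, the subgraph of `G` induced on the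
vertices strictly between `u` and `v` has chromatic number greater than `β`. -/
theorem stmt_0 {V : Type} [Fintype V] [LinearOrder V] (G : SimpleGraph V)
    (α β : ℕ) (hα : 1 ≤ α) (hβ : 1 ≤ β)
    (hχ : ((2 * β + 2) * α : ℕ∞) < G.chromaticNumber) :
    ∃ H : Set V, (α : ℕ∞) < (G.induce H).chromaticNumber ∧
      ∀ u ∈ H, ∀ v ∈ H, G.Adj u v →
        (β : ℕ∞) < (G.induce (Set.Ioo (min u v) (max u v))).chromaticNumber := by
  classical
  have hcast : ((2 * β + 2) * α : ℕ∞) = (((2 * β + 2) * α : ℕ) : ℕ∞) := by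
    push_cast; ring
  rcases isEmpty_or_nonempty V with hV | hV
  · exfalso
    have hcol : G.Colorable ((2 * β + 2) * α) := SimpleGraph.Colorable.of_isEmpty _
    rw [hcast] at hχ
    exact hχ.not_ge hcol.chromaticNumber_le
  obtain ⟨c, hc1, hc2⟩ := mcg_aux G β
    (Finset.univ.filter (fun x => (Finset.univ : Finset V).min' Finset.univ_nonempty ≤ x)).card
    ((Finset.univ : Finset V).min' Finset.univ_nonempty) true le_rfl
  have hw0 : ∀ x : V, (Finset.univ : Finset V).min' Finset.univ_nonempty ≤ x :=
    fun x => Finset.min'_le _ _ (Finset.mem_univ x)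
  by_cases hallcol : ∀ k : Bool × Fin (β + 1), (G.induce (c ⁻¹' {k})).Colorable α
  · -- all classes α-colorable ⟹ G is (2β+2)α-colorable: contradiction
    exfalso
    have hα0 : 0 < α := hα
    set g : (Bool × Fin (β + 1)) → V → Fin α :=
      (fun k x => if hx : c x = k then (hallcol k).some ⟨x, by simp [hx]⟩ else ⟨0, hα0⟩)
      with hg
    have hkey : ∀ (k : Bool × Fin (β + 1)) (u v : V), c u = k → c v = k → G.Adj u v →
        g k u ≠ g k v := by
      intro k u v hu hv hadj
      rw [hg]
      simp only [dif_pos hu, dif_pos hv]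
      exact (hallcol k).some.valid (by simpa using hadj)
    have F : G.Coloring ((Bool × Fin (β + 1)) × Fin α) := by
      refine SimpleGraph.Coloring.mk (fun v => (c v, g (c v) v)) ?_
      intro u v hadj heq
      have h1 : c u = c v := congrArg Prod.fst heq
      have h2 : g (c u) u = g (c v) v := congrArg Prod.snd heq
      rw [h1] at h2
      exact hkey (c v) u v h1 rfl hadj h2
    have hcol1 : G.Colorable (Fintype.card ((Bool × Fin (β + 1)) × Fin α)) := F.colorable
    have hcardeq : Fintype.card ((Bool × Fin (β + 1)) × Fin α) = (2 * β + 2) * α := by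
      rw [Fintype.card_prod, Fintype.card_prod, Fintype.card_bool, Fintype.card_fin,
        Fintype.card_fin]
      ring
    rw [hcardeq] at hcol1
    rw [hcast] at hχ
    exact hχ.not_ge hcol1.chromaticNumber_le
  · push_neg at hallcol
    obtain ⟨k, hk⟩ := hallcol
    refine ⟨c ⁻¹' {k}, ?_, ?_⟩
    · by_contra hle
      push_neg at hle
      exact hk (SimpleGraph.chromaticNumber_le_iff_colorable.mp hle)
    · intro u hu v hv hadj
      have hcu : c u = k := hu
      have hcv : c v = k := hv
      have hlong := hc1 u v (hw0 u) (hw0 v) hadj (hcu.trans hcv.symm)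
      by_contra hle
      push_neg at hle
      exact hlong (SimpleGraph.chromaticNumber_le_iff_colorable.mp hle)
end

section
/- Let G be a graph with a total order ≺ on its vertices, and β a positive integer. If χ(G) > 2β+2, then G has an edge uv such that the subgraph of G induced on the vertices strictly between u and v in the order ≺ has chromatic number greater than β. -/
open SimpleGraph

section Aux

variable {V : Type} [Fintype V] [LinearOrder V]

private lemma induce_colorable_mono (G : SimpleGraph V) {s t : Set V} (hst : s ⊆ t) {n : ℕ}
    (h : (G.induce t).Colorable n) : (G.induce s).Colorable n :=
  Colorable.of_hom (SimpleGraph.induceHomOfLE G hst).toHom h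

private lemma induce_colorable_subsingleton (G : SimpleGraph V) {s : Set V}
    (hs : s.Subsingleton) {n : ℕ} (hn : 1 ≤ n) : (G.induce s).Colorable n := by
  refine ⟨Coloring.mk (fun _ => (⟨0, hn⟩ : Fin n)) ?_⟩
  rintro ⟨x, hx⟩ ⟨y, hy⟩ hadj
  have hxy : G.Adj x y := hadj
  exact fun _ => G.ne_of_adj hxy (hs hx hy)

private lemma induce_colorable_insert (G : SimpleGraph V) {s : Set V} (a : V) {n : ℕ}
    (h : (G.induce s).Colorable n) : (G.induce (insert a s)).Colorable (n + 1) := by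
  classical
  obtain ⟨C⟩ := h
  refine ⟨Coloring.mk
    (fun x => if hx : (x : V) = a then Fin.last n
      else (C ⟨x, x.2.resolve_left hx⟩).castSucc) ?_⟩
  rintro ⟨x, hx⟩ ⟨y, hy⟩ hadj
  have hxy : G.Adj x y := hadj
  by_cases h1 : x = a <;> by_cases h2 : y = a
  · exact absurd (h1.trans h2.symm) hxy.ne
  · simp only [dif_pos h1, dif_neg h2]
    exact (Fin.castSucc_lt_last _).ne'
  · simp only [dif_neg h1, dif_pos h2]
    exact (Fin.castSucc_lt_last _).ne
  · simp only [dif_neg h1, dif_neg h2]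
    intro hc
    exact C.valid (by exact hxy : (G.induce s).Adj ⟨x, _⟩ ⟨y, _⟩)
      (Fin.castSucc_injective _ hc)

end Aux

section Main

variable {V : Type} [Fintype V] [LinearOrder V]

/-- `Bad G β t w` means the interval `[t,w]` is not `(β+1)`-colorable. -/
private def Bad (G : SimpleGraph V) (β : ℕ) (t w : V) : Prop :=
  ¬ (G.induce (Set.Icc t w)).Colorable (β + 1)

private lemma bad_mono (G : SimpleGraph V) (β : ℕ) {t w w' : V} (h : Bad G β t w)
    (hw : w ≤ w') : Bad G β t w' :=
  fun hc => h (induce_colorable_mono G (Set.Icc_subset_Icc_right hw) hc)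

open Classical in
/-- The least `w` with `Bad G β t w`, if any. -/
private noncomputable def nxt (G : SimpleGraph V) (β : ℕ) (t : V) : Option V :=
  if h : (Finset.univ.filter (fun w => Bad G β t w)).Nonempty
    then some ((Finset.univ.filter (fun w => Bad G β t w)).min' h) else none

private lemma nxt_spec {G : SimpleGraph V} {β : ℕ} {t w : V} (h : nxt G β t = some w) :
    Bad G β t w ∧ ∀ w', Bad G β t w' → w ≤ w' := by
  classical
  unfold nxt at h
  split at h
  · rename_i hne
    obtain rfl : _ = w := Option.some.inj h
    constructor
    · have := Finset.min'_mem _ hne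
      simpa using this
    · intro w' hw'
      exact Finset.min'_le _ _ (by simpa using hw')
  · exact absurd h (by simp)

private lemma nxt_none {G : SimpleGraph V} {β : ℕ} {t : V} (h : nxt G β t = none) :
    ∀ w, ¬ Bad G β t w := by
  classical
  unfold nxt at h
  split at h
  · exact absurd h (by simp)
  · rename_i hne
    intro w hw
    exact hne ⟨w, by simpa using hw⟩

private lemma nxt_lt {G : SimpleGraph V} {β : ℕ} {t w : V} (h : nxt G β t = some w) :
    t < w := by
  by_contra hle
  push_neg at hle
  have hbad := (nxt_spec h).1
  refine hbad (induce_colorable_subsingleton G ?_ (by omega))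
  intro x hx y hy
  have hxt : x = t := le_antisymm (hx.2.trans hle) hx.1
  have hyt : y = t := le_antisymm (hy.2.trans hle) hy.1
  rw [hxt, hyt]

variable [Nonempty V]

private noncomputable def seq (G : SimpleGraph V) (β : ℕ) : ℕ → Option V
  | 0 => some (Finset.univ.min' Finset.univ_nonempty)
  | (k+1) => (seq G β k).bind (nxt G β)

private lemma seq_zero (G : SimpleGraph V) (β : ℕ) :
    seq G β 0 = some (Finset.univ.min' Finset.univ_nonempty) := rfl

private lemma seq_succ_some {G : SimpleGraph V} {β : ℕ} {k : ℕ} {w : V}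
    (h : seq G β (k+1) = some w) : ∃ t, seq G β k = some t ∧ nxt G β t = some w := by
  rw [seq] at h
  cases hk : seq G β k with
  | none => rw [hk] at h; simp at h
  | some t => rw [hk] at h; exact ⟨t, rfl, h⟩

private lemma seq_le {G : SimpleGraph V} {β : ℕ} :
    ∀ {l k : ℕ}, k ≤ l → ∀ {w : V}, seq G β l = some w →
      ∃ t, seq G β k = some t ∧ t ≤ w := by
  intro l
  induction l with
  | zero => intro k hk w hw; interval_cases k; exact ⟨w, hw, le_refl w⟩
  | succ l ih =>
    intro k hk w hw
    rcases Nat.eq_or_lt_of_le hk with rfl | hk'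
    · exact ⟨w, hw, le_refl w⟩
    · obtain ⟨t, ht, hnx⟩ := seq_succ_some hw
      obtain ⟨t', ht', hle⟩ := ih (Nat.lt_succ_iff.mp hk') ht
      exact ⟨t', ht', hle.trans (nxt_lt hnx).le⟩

private lemma seq_lt {G : SimpleGraph V} {β : ℕ} {k l : ℕ} (hkl : k < l) {w : V}
    (hw : seq G β l = some w) : ∃ t, seq G β k = some t ∧ t < w := by
  obtain ⟨t1, ht1, hle1⟩ := seq_le hkl hw
  obtain ⟨t, ht, hnx⟩ := seq_succ_some ht1
  exact ⟨t, ht, (nxt_lt hnx).trans_le hle1⟩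

private lemma seq_lt_card {G : SimpleGraph V} {β : ℕ} {k : ℕ} {t : V}
    (h : seq G β k = some t) : k < Fintype.card V := by
  have key : ∀ j : Fin (k+1), ∃ s, seq G β (j : ℕ) = some s ∧ s ≤ t :=
    fun j => seq_le (Nat.lt_succ_iff.mp j.2) h
  choose f hf using key
  have hinj : Function.Injective f := by
    intro j j' hjj'
    by_contra hne
    rcases lt_or_gt_of_ne (fun hc : (j : ℕ) = (j' : ℕ) => hne (Fin.ext hc)) with hlt | hlt
    · obtain ⟨s, hs, hslt⟩ := seq_lt hlt (hf j').1
      rw [(hf j).1] at hs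
      exact absurd hjj' (by rw [← Option.some.inj hs] at hslt; exact hslt.ne)
    · obtain ⟨s, hs, hslt⟩ := seq_lt hlt (hf j).1
      rw [(hf j').1] at hs
      exact absurd hjj'.symm (by rw [← Option.some.inj hs] at hslt; exact hslt.ne)
  have := Fintype.card_le_of_injective f hinj
  simpa using this

open Classical in
private noncomputable def idxSet (G : SimpleGraph V) (β : ℕ) (v : V) : Finset ℕ :=
  (Finset.range (Fintype.card V)).filter (fun k => ∃ t, seq G β k = some t ∧ t ≤ v)

private lemma idxSet_mem {G : SimpleGraph V} {β : ℕ} {v : V} {k : ℕ} :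
    k ∈ idxSet G β v ↔ ∃ t, seq G β k = some t ∧ t ≤ v := by
  classical
  unfold idxSet
  simp only [Finset.mem_filter, Finset.mem_range, and_iff_right_iff_imp]
  rintro ⟨t, ht, -⟩
  exact seq_lt_card ht

private lemma idxSet_nonempty (G : SimpleGraph V) (β : ℕ) (v : V) :
    (idxSet G β v).Nonempty :=
  ⟨0, idxSet_mem.mpr ⟨_, seq_zero G β, Finset.min'_le _ _ (Finset.mem_univ v)⟩⟩

private noncomputable def idx (G : SimpleGraph V) (β : ℕ) (v : V) : ℕ :=
  (idxSet G β v).max' (idxSet_nonempty G β v)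

private lemma idx_mem (G : SimpleGraph V) (β : ℕ) (v : V) :
    ∃ t, seq G β (idx G β v) = some t ∧ t ≤ v :=
  idxSet_mem.mp (Finset.max'_mem _ _)

private lemma idx_le {G : SimpleGraph V} {β : ℕ} {v : V} {k : ℕ} {t : V}
    (h : seq G β k = some t) (htv : t ≤ v) : k ≤ idx G β v :=
  Finset.le_max' _ _ (idxSet_mem.mpr ⟨t, h, htv⟩)

private lemma idx_mono {G : SimpleGraph V} {β : ℕ} {u v : V} (huv : u ≤ v) :
    idx G β u ≤ idx G β v := by
  obtain ⟨t, ht, htu⟩ := idx_mem G β u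
  exact idx_le ht (htu.trans huv)

private lemma idx_succ_gt {G : SimpleGraph V} {β : ℕ} {v : V} {w : V}
    (h : seq G β (idx G β v + 1) = some w) : v < w := by
  by_contra hle
  push_neg at hle
  exact absurd (idx_le h hle) (by omega)

/-- The interval from the block start of `v` up to `v` is `(β+1)`-colorable. -/
private lemma block_prefix_colorable {G : SimpleGraph V} {β : ℕ} {v t : V}
    (h : seq G β (idx G β v) = some t) :
    (G.induce (Set.Icc t v)).Colorable (β + 1) := by
  have hsucc : seq G β (idx G β v + 1) = (nxt G β t) := by rw [seq, h]; rfl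
  by_contra hbad
  cases hnx : nxt G β t with
  | none => exact nxt_none hnx v hbad
  | some w =>
    have hvw : v < w := idx_succ_gt (by rw [hsucc, hnx])
    exact absurd ((nxt_spec hnx).2 v hbad) (by exact fun hc => absurd hvw (not_lt.mpr hc))

open Classical in
private noncomputable def blockFinset (G : SimpleGraph V) (β : ℕ) (k : ℕ) : Finset V :=
  Finset.univ.filter (fun x => idx G β x = k)

private lemma mem_blockFinset {G : SimpleGraph V} {β : ℕ} {x : V} {k : ℕ} :
    x ∈ blockFinset G β k ↔ idx G β x = k := by
  classical
  unfold blockFinset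
  simp

private noncomputable def blockStart (G : SimpleGraph V) (β : ℕ) (k : ℕ) : V :=
  (seq G β k).getD (Classical.arbitrary V)

open Classical in
private noncomputable def blockMax (G : SimpleGraph V) (β : ℕ) (k : ℕ) : V :=
  if h : (blockFinset G β k).Nonempty then (blockFinset G β k).max' h
  else Classical.arbitrary V

private lemma block_colorable (G : SimpleGraph V) (β : ℕ) (k : ℕ)
    (h : (blockFinset G β k).Nonempty) :
    (G.induce (Set.Icc (blockStart G β k) (blockMax G β k))).Colorable (β + 1) := by
  classical
  set m := (blockFinset G β k).max' h with hm
  have hmk : idx G β m = k := mem_blockFinset.mp (Finset.max'_mem _ _)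
  obtain ⟨t, ht, -⟩ := idx_mem G β m
  have hstart : blockStart G β k = t := by
    unfold blockStart; rw [← hmk, ht]; rfl
  have hmax : blockMax G β k = m := by
    unfold blockMax; rw [dif_pos h]
  rw [hstart, hmax]
  exact block_prefix_colorable ht

private lemma col_mem (G : SimpleGraph V) (β : ℕ) (v : V) :
    v ∈ Set.Icc (blockStart G β (idx G β v)) (blockMax G β (idx G β v)) := by
  have hne : (blockFinset G β (idx G β v)).Nonempty := ⟨v, mem_blockFinset.mpr rfl⟩
  constructor
  · obtain ⟨t, ht, htv⟩ := idx_mem G β v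
    have hstart : blockStart G β (idx G β v) = t := by unfold blockStart; rw [ht]; rfl
    rw [hstart]; exact htv
  · have hmax : blockMax G β (idx G β v) = (blockFinset G β (idx G β v)).max' hne := by
      unfold blockMax; rw [dif_pos hne]
    rw [hmax]
    exact Finset.le_max' _ _ (mem_blockFinset.mpr rfl)

private noncomputable def col (G : SimpleGraph V) (β : ℕ) (v : V) : Fin (β + 1) :=
  (block_colorable G β (idx G β v) ⟨v, mem_blockFinset.mpr rfl⟩).some ⟨v, col_mem G β v⟩

private lemma col_spec (G : SimpleGraph V) (β : ℕ) (v : V) (k : ℕ) (hk : idx G β v = k)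
    (h : (blockFinset G β k).Nonempty)
    (hm : v ∈ Set.Icc (blockStart G β k) (blockMax G β k)) :
    col G β v = (block_colorable G β k h).some ⟨v, hm⟩ := by
  subst hk; rfl

private lemma col_valid {G : SimpleGraph V} {β : ℕ} {u v : V}
    (hadj : G.Adj u v) (hidx : idx G β u = idx G β v) : col G β u ≠ col G β v := by
  have h1 : (blockFinset G β (idx G β v)).Nonempty := ⟨v, mem_blockFinset.mpr rfl⟩
  have hmu : u ∈ Set.Icc (blockStart G β (idx G β v)) (blockMax G β (idx G β v)) :=
    hidx ▸ col_mem G β u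
  have hmv := col_mem G β v
  rw [col_spec G β u (idx G β v) hidx h1 hmu, col_spec G β v (idx G β v) rfl h1 hmv]
  have hadj' : (G.induce (Set.Icc (blockStart G β (idx G β v))
      (blockMax G β (idx G β v)))).Adj ⟨u, hmu⟩ ⟨v, hmv⟩ := hadj
  exact (block_colorable G β (idx G β v) h1).some.valid hadj'

private lemma key_step {G : SimpleGraph V} {β : ℕ}
    (h : ∀ u v : V, G.Adj u v → u < v → (G.induce (Set.Ioo u v)).Colorable β)
    {u v : V} (hadj : G.Adj u v) (huv : u < v) : idx G β v ≤ idx G β u + 1 := by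
  by_contra hgt
  push_neg at hgt
  obtain ⟨tv, htv, htvle⟩ := idx_mem G β v
  obtain ⟨w2, hw2, hw2le⟩ := seq_le (show idx G β u + 2 ≤ idx G β v by omega) htv
  obtain ⟨w1, hw1, hnx⟩ := seq_succ_some hw2
  have hu_w1 : u < w1 := idx_succ_gt hw1
  have hbad : Bad G β w1 w2 := (nxt_spec hnx).1
  have hcol : (G.induce (Set.Ioo u v)).Colorable β := h u v hadj huv
  have hw2v : w2 ≤ v := hw2le.trans htvle
  apply hbad
  rcases eq_or_lt_of_le hw2v with rfl | hlt
  · have hsub : Set.Icc w1 w2 ⊆ insert w2 (Set.Ioo u w2) := by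
      intro x hx
      rcases eq_or_lt_of_le hx.2 with rfl | hxlt
      · exact Set.mem_insert _ _
      · exact Set.mem_insert_of_mem _ ⟨hu_w1.trans_le hx.1, hxlt⟩
    exact induce_colorable_mono G hsub (induce_colorable_insert G _ hcol)
  · have hsub : Set.Icc w1 w2 ⊆ Set.Ioo u v := fun x hx =>
      ⟨hu_w1.trans_le hx.1, lt_of_le_of_lt hx.2 hlt⟩
    exact (induce_colorable_mono G hsub hcol).mono (by omega)

private lemma main_colorable (G : SimpleGraph V) (β : ℕ)
    (h : ∀ u v : V, G.Adj u v → u < v → (G.induce (Set.Ioo u v)).Colorable β) :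
    G.Colorable (2 * β + 2) := by
  classical
  have haux : ∀ u v : V, G.Adj u v → u < v →
      ((⟨idx G β u % 2, Nat.mod_lt _ (by omega)⟩ : Fin 2), col G β u) ≠
      ((⟨idx G β v % 2, Nat.mod_lt _ (by omega)⟩ : Fin 2), col G β v) := by
    intro u v hadj huv hc
    have h1 : idx G β u % 2 = idx G β v % 2 := by
      have := congrArg Prod.fst hc
      simpa using this
    have h2 : col G β u = col G β v := congrArg Prod.snd hc
    have hle : idx G β u ≤ idx G β v := idx_mono huv.le
    have hle2 : idx G β v ≤ idx G β u + 1 := key_step h hadj huv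
    rcases Nat.eq_or_lt_of_le hle with heq | hlt
    · exact col_valid hadj heq h2
    · have : idx G β v = idx G β u + 1 := by omega
      rw [this] at h1
      omega
  have D : G.Coloring (Fin 2 × Fin (β + 1)) := by
    refine Coloring.mk
      (fun v => (⟨idx G β v % 2, Nat.mod_lt _ (by omega)⟩, col G β v)) ?_
    intro u v hadj
    rcases hadj.ne.lt_or_gt with huv | hvu
    · exact haux u v hadj huv
    · exact fun hc => haux v u hadj.symm hvu hc.symm
  have := D.colorable
  have hcard : Fintype.card (Fin 2 × Fin (β + 1)) = 2 * β + 2 := by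
    simp [Fintype.card_prod]; omega
  rwa [hcard] at this

end Main

/-- If `χ(G) > 2β+2`, then `G` has an edge `uv` such that the subgraph of `G` induced on
the vertices strictly between `u` and `v` has chromatic number greater than `β`. -/
theorem stmt_1 {V : Type} [Fintype V] [LinearOrder V] (G : SimpleGraph V)
    (β : ℕ) (hβ : 1 ≤ β)
    (hχ : (2 * β + 2 : ℕ∞) < G.chromaticNumber) :
    ∃ u v, G.Adj u v ∧
      (β : ℕ∞) < (G.induce (Set.Ioo (min u v) (max u v))).chromaticNumber := by
  classical
  by_contra hcon
  push_neg at hcon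
  have h : ∀ u v : V, G.Adj u v → u < v → (G.induce (Set.Ioo u v)).Colorable β := by
    intro u v hadj huv
    have := hcon u v hadj
    rw [min_eq_left huv.le, max_eq_right huv.le] at this
    exact (SimpleGraph.chromaticNumber_le_iff_colorable).mp this
  have hcol : G.Colorable (2 * β + 2) := by
    cases isEmpty_or_nonempty V with
    | inl hV => exact ⟨SimpleGraph.Coloring.mk (fun v => isEmptyElim v)
        (fun {a} => isEmptyElim a)⟩
    | inr hV => exact main_colorable G β h
  have hle := hcol.chromaticNumber_le
  have : ((2 * β + 2 : ℕ) : ℕ∞) = (2 * β + 2 : ℕ∞) := by push_cast; ring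
  rw [this] at hle
  exact absurd hχ (not_lt.mpr hle)
end
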